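/- arXiv:1707.06613 — 3 statements merged into one kernel-verified Lean document; each statement's English description precedes it below -/
import Mathlib

section
/- Consider inputs x ∈ {0,1}^d, d ≥ 2, with group membership given by the last bit x_d and target y = x_{d-1} XOR x_d under the uniform distribution. There exist two affine functions c₁, c₂ (one per group) such that the decoupled classifier γ(x) = c_{x_d + 1}(x) achieves zero squared error, while every single affine function has squared error at least 1/4. Hence the cost of coupling of linear regression with squared loss is at least 1/4. -/
section aux

variable {d : ℕ}

private def flipAt (j : Fin d) (x : Fin d → Bool) : Fin d → Bool :=
  Function.update x j (!x j)

private lemma flipAt_apply_ne (j i : Fin d) (x : Fin d → Bool) (h : i ≠ j) :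
    flipAt j x i = x i := by
  simp [flipAt, Function.update_of_ne h]

private lemma flipAt_apply_self (j : Fin d) (x : Fin d → Bool) :
    flipAt j x j = !x j := by
  simp [flipAt]

private lemma flipAt_invol (j : Fin d) : Function.Involutive (flipAt j) := by
  intro x
  funext i
  by_cases h : i = j
  · subst h; simp [flipAt]
  · simp [flipAt, Function.update_of_ne h]

private lemma sum_eq_zero_of_flip (F : (Fin d → Bool) → ℝ) (j : Fin d)
    (h : ∀ x, F (flipAt j x) = -F x) : ∑ x : Fin d → Bool, F x = 0 := by
  have hb := (flipAt_invol j).bijective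
  have h1 : ∑ x : Fin d → Bool, F (flipAt j x) = ∑ x : Fin d → Bool, F x :=
    Fintype.sum_bijective _ hb _ _ (fun x => rfl)
  have h2 : ∑ x : Fin d → Bool, F (flipAt j x) = -∑ x : Fin d → Bool, F x := by
    simp [h]
  linarith

end aux

open Finset in
theorem stmt_9 (d : ℕ) (hd : 2 ≤ d) :
    (∃ (w₁ w₂ : Fin d → ℝ) (b₁ b₂ : ℝ),
      ∑ x : Fin d → Bool,
        ((if x ⟨d - 2, by omega⟩ ≠ x ⟨d - 1, by omega⟩ then (1 : ℝ) else 0)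
          - (if x ⟨d - 1, by omega⟩
              then ∑ i, w₂ i * (if x i then (1 : ℝ) else 0) + b₂
              else ∑ i, w₁ i * (if x i then (1 : ℝ) else 0) + b₁)) ^ 2 = 0)
    ∧ (∀ (w : Fin d → ℝ) (b : ℝ),
        (1 : ℝ) / 4 ≤
          (∑ x : Fin d → Bool,
            ((if x ⟨d - 2, by omega⟩ ≠ x ⟨d - 1, by omega⟩ then (1 : ℝ) else 0)
              - (∑ i, w i * (if x i then (1 : ℝ) else 0) + b)) ^ 2) / 2 ^ d) := by
  have h1 : d - 2 < d := by omega
  have h2 : d - 1 < d := by omega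
  set i1 : Fin d := ⟨d - 2, h1⟩ with hi1
  set i2 : Fin d := ⟨d - 1, h2⟩ with hi2
  have hne : i1 ≠ i2 := by
    simp only [hi1, hi2, Ne, Fin.mk.injEq]
    omega
  constructor
  · -- decoupled classifier achieves zero error
    refine ⟨(fun i => if i = i1 then 1 else 0), (fun i => if i = i1 then -1 else 0), 0, 1, ?_⟩
    apply Finset.sum_eq_zero
    intro x _
    have hs1 : ∑ i, (if i = i1 then (1:ℝ) else 0) * (if x i then (1 : ℝ) else 0)
        = (if x i1 then (1:ℝ) else 0) := by
      rw [Finset.sum_eq_single i1]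
      · simp
      · intro i _ hi; simp [hi]
      · simp
    have hs2 : ∑ i, (if i = i1 then (-1:ℝ) else 0) * (if x i then (1 : ℝ) else 0)
        = -(if x i1 then (1:ℝ) else 0) := by
      rw [Finset.sum_eq_single i1]
      · by_cases h : x i1 <;> simp [h]
      · intro i _ hi; simp [hi]
      · simp
    rw [hs1, hs2]
    cases hb1 : x i1 <;> cases hb2 : x i2 <;>
      simp [hb1, hb2] <;> norm_num
  · -- any single affine classifier has error at least 1/4
    intro w b
    set s : (Fin d → Bool) → ℝ := fun x => if x i1 = x i2 then 1 else -1 with hsdef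
    set f : (Fin d → Bool) → ℝ := fun x =>
      (if x i1 ≠ x i2 then (1 : ℝ) else 0)
        - (∑ i, w i * (if x i then (1 : ℝ) else 0) + b) with hfdef
    have hs_val : ∀ x : Fin d → Bool, s x = if x i1 = x i2 then 1 else -1 :=
      fun x => rfl
    have hf_val : ∀ x : Fin d → Bool, f x = (if x i1 ≠ x i2 then (1 : ℝ) else 0)
        - (∑ i, w i * (if x i then (1 : ℝ) else 0) + b) := fun x => rfl
    -- s flips sign under flipping i1 or i2
    have hs_flip : ∀ j, j = i1 ∨ j = i2 → ∀ x, s (flipAt j x) = -s x := by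
      intro j hj x
      rcases hj with rfl | rfl
      · have e1 : flipAt i1 x i1 = !x i1 := flipAt_apply_self _ _
        have e2 : flipAt i1 x i2 = x i2 := flipAt_apply_ne _ _ _ (Ne.symm hne)
        rw [hs_val, hs_val, e1, e2]
        cases x i1 <;> cases x i2 <;> norm_num
      · have e1 : flipAt i2 x i1 = x i1 := flipAt_apply_ne _ _ _ hne
        have e2 : flipAt i2 x i2 = !x i2 := flipAt_apply_self _ _
        rw [hs_val, hs_val, e1, e2]
        cases x i1 <;> cases x i2 <;> norm_num
    have hsum_s : ∑ x : Fin d → Bool, s x = 0 :=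
      sum_eq_zero_of_flip s i1 (hs_flip i1 (Or.inl rfl))
    have hcard : (Fintype.card (Fin d → Bool) : ℝ) = 2 ^ d := by
      simp [Fintype.card_fun]
    have hsum_one : ∑ _x : Fin d → Bool, (1 : ℝ) = 2 ^ d := by
      rw [Finset.sum_const, Finset.card_univ, nsmul_eq_mul, mul_one]
      exact hcard
    -- correlation with the target
    have h_target : ∑ x : Fin d → Bool,
        s x * (if x i1 ≠ x i2 then (1 : ℝ) else 0) = -(2 ^ (d - 1)) := by
      have : ∀ x : Fin d → Bool,
          s x * (if x i1 ≠ x i2 then (1 : ℝ) else 0) = (s x - 1) / 2 := by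
        intro x
        rw [hs_val]
        by_cases h : x i1 = x i2 <;> simp [h] <;> norm_num
      rw [Finset.sum_congr rfl (fun x _ => this x)]
      have hd2 : (2 : ℝ) ^ d = 2 * 2 ^ (d - 1) := by
        rw [← pow_succ']
        congr 1
        omega
      rw [← Finset.sum_div, Finset.sum_sub_distrib, hsum_s, hsum_one]
      rw [hd2]
      ring
    -- correlation with the prediction is zero
    have h_pred : ∑ x : Fin d → Bool,
        s x * (∑ i, w i * (if x i then (1 : ℝ) else 0) + b) = 0 := by
      have expand : ∀ x : Fin d → Bool,
          s x * (∑ i, w i * (if x i then (1 : ℝ) else 0) + b)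
            = (∑ i, w i * (s x * (if x i then (1 : ℝ) else 0))) + b * s x := by
        intro x
        rw [mul_add, Finset.mul_sum]
        ring_nf
      rw [Finset.sum_congr rfl (fun x _ => expand x), Finset.sum_add_distrib]
      rw [Finset.sum_comm]
      have hzero : ∀ i : Fin d,
          ∑ x : Fin d → Bool, s x * (if x i then (1 : ℝ) else 0) = 0 := by
        intro i
        obtain ⟨j, hj, hji⟩ : ∃ j, (j = i1 ∨ j = i2) ∧ j ≠ i := by
          by_cases h : i = i1
          · exact ⟨i2, Or.inr rfl, by rw [h]; exact Ne.symm hne⟩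
          · exact ⟨i1, Or.inl rfl, Ne.symm h⟩
        apply sum_eq_zero_of_flip _ j
        intro x
        rw [flipAt_apply_ne j i x (Ne.symm hji), hs_flip j hj x]
        ring
      have hA : ∑ i : Fin d, ∑ x : Fin d → Bool,
          w i * (s x * (if x i then (1 : ℝ) else 0)) = 0 := by
        apply Finset.sum_eq_zero
        intro i _
        rw [← Finset.mul_sum, hzero i, mul_zero]
      have hB : ∑ x : Fin d → Bool, b * s x = 0 := by
        rw [← Finset.mul_sum, hsum_s, mul_zero]
      rw [hA, hB, add_zero]
    have h_corr : ∑ x : Fin d → Bool, s x * f x = -(2 ^ (d - 1)) := by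
      have : ∀ x : Fin d → Bool, s x * f x
          = s x * (if x i1 ≠ x i2 then (1 : ℝ) else 0)
            - s x * (∑ i, w i * (if x i then (1 : ℝ) else 0) + b) := by
        intro x; rw [hf_val]; ring
      rw [Finset.sum_congr rfl (fun x _ => this x), Finset.sum_sub_distrib,
        h_target, h_pred]
      ring
    have hs_sq : ∑ x : Fin d → Bool, s x ^ 2 = 2 ^ d := by
      have : ∀ x : Fin d → Bool, s x ^ 2 = 1 := by
        intro x; rw [hs_val]; by_cases h : x i1 = x i2 <;> simp [h] <;> norm_num
      rw [Finset.sum_congr rfl (fun x _ => this x), hsum_one]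
    have hCS' : (∑ x : Fin d → Bool, s x * f x) ^ 2
        ≤ (∑ x : Fin d → Bool, s x ^ 2) * ∑ x : Fin d → Bool, f x ^ 2 :=
      Finset.sum_mul_sq_le_sq_mul_sq Finset.univ s f
    rw [h_corr, hs_sq] at hCS'
    have hd2 : (2 : ℝ) ^ d = 2 * 2 ^ (d - 1) := by
      rw [← pow_succ']
      congr 1
      omega
    have hpos : (0 : ℝ) < 2 ^ (d - 1) := by positivity
    have hgoal : (2 : ℝ) ^ d / 4 ≤ ∑ x : Fin d → Bool, f x ^ 2 := by
      rw [hd2] at hCS' ⊢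
      nlinarith [sq_nonneg ((2:ℝ) ^ (d-1))]
    show (1 : ℝ) / 4 ≤ (∑ x : Fin d → Bool, f x ^ 2) / 2 ^ d
    have hp : (0 : ℝ) < 2 ^ d := by positivity
    rw [le_div_iff₀ hp]
    linarith [hgoal]
end

section
/- Let T be a binary decision tree computing a function {0,1}^d → {0,1} where each internal node branches on one input coordinate, and suppose T has at most 2^s leaves. Let y = parity of the last s+1 input bits. Under the uniform distribution on {0,1}^d, any leaf of T whose root-to-leaf path queries fewer than all s+1 relevant bits has error rate exactly 1/2 among inputs reaching it; and the total probability mass of leaves at depth ≤ s is at least 1/2 in any tree with ≤ 2^s leaves; consequently the 0-1 error of T is at least 1/4. -/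
inductive DTree (d : ℕ) where
  | leaf (b : Bool)
  | node (i : Fin d) (t₀ t₁ : DTree d)

def DTree.eval {d : ℕ} : DTree d → (Fin d → Bool) → Bool
  | .leaf b, _ => b
  | .node i t₀ t₁, x => if x i then (t₁.eval x) else (t₀.eval x)

/-- Number of leaves of a decision tree. -/
def DTree.leaves {d : ℕ} : DTree d → ℕ
  | .leaf _ => 1
  | .node _ t₀ t₁ => t₀.leaves + t₁.leaves

/-- Total probability mass (under the uniform input distribution) of leaves at depth ≤ m. -/
def DTree.shallowMass {d : ℕ} : DTree d → ℕ → ℚ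
  | .leaf _, _ => 1
  | .node _ _ _, 0 => 0
  | .node _ t₀ t₁, m + 1 => (t₀.shallowMass m + t₁.shallowMass m) / 2

section AuxLemmas
open Finset

lemma beqsucc (a : ℕ) : ((a+1) % 2 == 1) = !(a % 2 == 1) := by
  rcases Nat.mod_two_eq_zero_or_one a with h | h <;> simp [Nat.add_mod, h]

lemma flip_concrete {d s : ℕ} (x : Fin d → Bool) (r : Fin d) (hr : d - (s+1) ≤ (r:ℕ)) :
    (((univ.filter fun i : Fin d => d - (s + 1) ≤ (i : ℕ) ∧ (Function.update x r (!x r)) i = true).card % 2 == 1))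
    = !((univ.filter fun i : Fin d => d - (s + 1) ≤ (i : ℕ) ∧ x i = true).card % 2 == 1) := by
  classical
  set S := univ.filter fun i : Fin d => d - (s + 1) ≤ (i : ℕ) ∧ x i = true with hS
  rcases Bool.eq_false_or_eq_true (x r) with hxr | hxr
  · -- x r = true : erase
    have h1 : (univ.filter fun i : Fin d => d - (s + 1) ≤ (i : ℕ) ∧ (Function.update x r (!x r)) i = true)
        = S.erase r := by
      ext i
      rcases eq_or_ne i r with rfl | hne
      · simp [hS, hxr]
      · simp [hS, Function.update_of_ne hne, hne]
    have h2 : r ∈ S := by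
      simp [hS, hxr]
      omega
    rw [h1, Finset.card_erase_of_mem h2]
    obtain ⟨k, hk⟩ : ∃ k, S.card = k + 1 :=
      ⟨S.card - 1, by have := Finset.card_pos.mpr ⟨r, h2⟩; omega⟩
    rw [hk]
    simp [beqsucc]
  · -- x r = false : insert
    have h1 : (univ.filter fun i : Fin d => d - (s + 1) ≤ (i : ℕ) ∧ (Function.update x r (!x r)) i = true)
        = insert r S := by
      ext i
      rcases eq_or_ne i r with rfl | hne
      · simp [hS, hxr]
        omega
      · simp [hS, Function.update_of_ne hne, hne]
    have h2 : r ∉ S := by simp [hS, hxr]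
    rw [h1, Finset.card_insert_of_notMem h2, beqsucc]

lemma halfcount {d s : ℕ} (par : (Fin d → Bool) → Bool)
    (hflip : ∀ (x : Fin d → Bool) (r : Fin d), d - (s+1) ≤ (r:ℕ) →
      par (Function.update x r (!x r)) = !par x)
    (σ : Fin d → Option Bool) (r : Fin d) (hr1 : d - (s + 1) ≤ (r : ℕ)) (hr2 : σ r = none) :
    (univ.filter fun x : Fin d → Bool =>
        (∀ i b, σ i = some b → x i = b) ∧ par x = true).card
      = (univ.filter fun x : Fin d → Bool =>
          (∀ i b, σ i = some b → x i = b) ∧ par x = false).card := by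
  classical
  have hcons : ∀ x : Fin d → Bool, (∀ i b, σ i = some b → x i = b) →
      (∀ i b, σ i = some b → Function.update x r (!x r) i = b) := by
    intro x hx i b hib
    rcases eq_or_ne i r with rfl | hne
    · rw [hr2] at hib; cases hib
    · rw [Function.update_of_ne hne]; exact hx i b hib
  have hinv : ∀ x : Fin d → Bool,
      Function.update (Function.update x r (!x r)) r (!(Function.update x r (!x r)) r) = x := by
    intro x
    funext j
    rcases eq_or_ne j r with rfl | hne
    · simp
    · simp [Function.update_of_ne hne]
  apply Finset.card_bij' (fun x _ => Function.update x r (!x r))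
      (fun x _ => Function.update x r (!x r))
  · intro x hx; exact hinv x
  · intro x hx; exact hinv x
  · intro x hx
    simp only [mem_filter, mem_univ, true_and] at hx ⊢
    exact ⟨hcons x hx.1, by rw [hflip x r hr1, hx.2]; rfl⟩
  · intro x hx
    simp only [mem_filter, mem_univ, true_and] at hx ⊢
    exact ⟨hcons x hx.1, by rw [hflip x r hr1, hx.2]; rfl⟩

lemma relcard {d s : ℕ} (hds : s + 1 ≤ d) :
    (univ.filter fun i : Fin d => d - (s + 1) ≤ (i : ℕ)).card = s + 1 := by
  classical
  have h := Finset.card_nbij (i := fun i : Fin d => (i : ℕ))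
    (s := univ.filter fun i : Fin d => d - (s + 1) ≤ (i : ℕ))
    (t := Finset.Ico (d - (s + 1)) d)
    (by intro a ha
        simp only [Finset.mem_coe, mem_filter, mem_univ, true_and] at ha
        simp only [Finset.mem_coe, Finset.mem_Ico]
        exact ⟨ha, a.isLt⟩)
    (Fin.val_injective.injOn)
    (by intro m hm
        simp at hm ⊢
        exact ⟨⟨m, hm.2⟩, hm.1, rfl⟩)
  rw [h, Nat.card_Ico]
  omega

lemma cardle {d s : ℕ} (hds : s + 1 ≤ d) (σ : Fin d → Option Bool)
    (h : ∀ r : Fin d, d - (s + 1) ≤ (r : ℕ) → σ r ≠ none) :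
    (univ.filter fun x : Fin d → Bool => ∀ i b, σ i = some b → x i = b).card
      ≤ 2 ^ (d - (s + 1)) := by
  classical
  have hmap : (univ.filter fun x : Fin d → Bool => ∀ i b, σ i = some b → x i = b).card
      ≤ (univ : Finset ({i : Fin d // σ i = none} → Bool)).card := by
    apply Finset.card_le_card_of_injOn (fun x => fun i => x i.1)
    · intro x _; exact mem_univ _
    · intro x hx y hy hxy
      simp only [coe_filter, Set.mem_setOf_eq, mem_univ, true_and] at hx hy
      funext i
      by_cases hi : σ i = none
      · exact congrFun hxy ⟨i, hi⟩
      · obtain ⟨b, hb⟩ := Option.ne_none_iff_exists'.mp hi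
        rw [hx i b hb, hy i b hb]
  have hcard : (univ : Finset ({i : Fin d // σ i = none} → Bool)).card
      = 2 ^ (univ.filter fun i : Fin d => σ i = none).card := by
    rw [Finset.card_univ, Fintype.card_fun, Fintype.card_bool, Fintype.card_subtype]
  have hle : (univ.filter fun i : Fin d => σ i = none).card ≤ d - (s + 1) := by
    have h1 : (univ.filter fun i : Fin d => d - (s + 1) ≤ (i : ℕ)).card
        ≤ (univ.filter fun i : Fin d => ¬ σ i = none).card := by
      apply Finset.card_le_card
      intro i hi
      simp only [mem_filter, mem_univ, true_and] at hi ⊢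
      exact h i hi
    have h2 : (univ.filter fun i : Fin d => σ i = none).card
        + (univ.filter fun i : Fin d => ¬ σ i = none).card = d := by
      rw [Finset.card_filter_add_card_filter_not]
      simp
    rw [relcard hds] at h1
    clear h hmap
    omega
  calc (univ.filter fun x : Fin d → Bool => ∀ i b, σ i = some b → x i = b).card
      ≤ 2 ^ (univ.filter fun i : Fin d => σ i = none).card := hmap.trans_eq hcard
    _ ≤ 2 ^ (d - (s + 1)) := Nat.pow_le_pow_right (by norm_num) hle

lemma leaves_pos {d : ℕ} (T : DTree d) : 1 ≤ T.leaves := by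
  induction T with
  | leaf b => simp [DTree.leaves]
  | node i t₀ t₁ ih₀ ih₁ => simp [DTree.leaves]; omega

lemma mass' {d : ℕ} (T : DTree d) : ∀ m : ℕ,
    (2 : ℚ) ^ (m + 1) - T.leaves ≤ 2 ^ (m + 1) * T.shallowMass m := by
  induction T with
  | leaf b =>
    intro m
    have : (1 : ℚ) ≤ (DTree.leaf b (d := d)).leaves := by
      exact_mod_cast leaves_pos _
    simp only [DTree.shallowMass, mul_one]
    linarith
  | node i t₀ t₁ ih₀ ih₁ =>
    intro m
    cases m with
    | zero =>
      have h1 := leaves_pos t₀; have h2 := leaves_pos t₁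
      simp only [DTree.shallowMass, mul_zero]
      norm_num
      simp only [DTree.leaves]
      omega
    | succ m =>
      have h₀ := ih₀ m
      have h₁ := ih₁ m
      have hp : (2 : ℚ) ^ (m + 1 + 1) = 2 * 2 ^ (m + 1) := by ring
      simp only [DTree.shallowMass, DTree.leaves]
      push_cast
      rw [hp]
      have : 2 * (2:ℚ) ^ (m+1) * ((t₀.shallowMass m + t₁.shallowMass m) / 2)
          = 2 ^ (m+1) * t₀.shallowMass m + 2 ^ (m+1) * t₁.shallowMass m := by ring
      rw [this]
      linarith

lemma mass_half {d s : ℕ} (T : DTree d) (hT : T.leaves ≤ 2 ^ s) :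
    (1 : ℚ) / 2 ≤ T.shallowMass s := by
  have h := mass' T s
  have hL : (T.leaves : ℚ) ≤ 2 ^ s := by exact_mod_cast hT
  have hp : (2 : ℚ) ^ (s + 1) = 2 * 2 ^ s := by ring
  have hpos : (0 : ℚ) < 2 ^ s := by positivity
  rw [hp] at h
  nlinarith [h, hL, hpos]

lemma mainM {d s : ℕ} (hds : s + 1 ≤ d) (par : (Fin d → Bool) → Bool)
    (hflip : ∀ (x : Fin d → Bool) (r : Fin d), d - (s+1) ≤ (r:ℕ) →
      par (Function.update x r (!x r)) = !par x) :
    ∀ (T : DTree d) (σ : Fin d → Option Bool),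
    (univ.filter fun x : Fin d → Bool => ∀ i b, σ i = some b → x i = b).card
      ≤ 2 * (univ.filter fun x : Fin d → Bool =>
              (∀ i b, σ i = some b → x i = b) ∧ T.eval x ≠ par x).card
        + T.leaves * 2 ^ (d - (s + 1)) := by
  classical
  intro T
  induction T with
  | leaf b =>
    intro σ
    by_cases h : ∃ r : Fin d, d - (s + 1) ≤ (r : ℕ) ∧ σ r = none
    · obtain ⟨r, hr1, hr2⟩ := h
      have hhalf := halfcount par hflip σ r hr1 hr2
      have hsplit : (univ.filter fun x : Fin d → Bool => ∀ i b, σ i = some b → x i = b).card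
          = (univ.filter fun x : Fin d → Bool =>
              (∀ i b, σ i = some b → x i = b) ∧ par x = true).card
            + (univ.filter fun x : Fin d → Bool =>
              (∀ i b, σ i = some b → x i = b) ∧ par x = false).card := by
        rw [← Finset.card_filter_add_card_filter_not
          (s := univ.filter fun x : Fin d → Bool => ∀ i b, σ i = some b → x i = b)
          (p := fun x => par x = true)]
        simp only [Finset.filter_filter, Bool.not_eq_true]
      have hE : (univ.filter fun x : Fin d → Bool =>
              (∀ i b, σ i = some b → x i = b) ∧ (DTree.leaf b).eval x ≠ par x).card
          = (univ.filter fun x : Fin d → Bool =>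
              (∀ i b, σ i = some b → x i = b) ∧ par x = (!b)).card := by
        apply congrArg
        apply Finset.filter_congr
        intro x _
        simp only [DTree.eval]
        constructor
        · rintro ⟨hc, hne⟩
          refine ⟨hc, ?_⟩
          cases hb : par x <;> cases b <;> simp_all
        · rintro ⟨hc, hne⟩
          refine ⟨hc, ?_⟩
          cases b <;> simp_all
      rw [hE]
      have hleaf : (DTree.leaf b (d := d)).leaves = 1 := rfl
      rw [hleaf, hsplit]
      cases b
      · simp only [Bool.not_false]
        linarith [hhalf, Nat.zero_le (2 ^ (d - (s + 1)))]
      · simp only [Bool.not_true]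
        linarith [hhalf, Nat.zero_le (2 ^ (d - (s + 1)))]
    · push_neg at h
      have h1 := cardle (s := s) hds σ h
      have h2 := Nat.le_add_left ((2:ℕ) ^ (d - (s + 1)))
        (2 * (univ.filter fun x : Fin d → Bool =>
              (∀ i b, σ i = some b → x i = b) ∧ (DTree.leaf b).eval x ≠ par x).card)
      have hleaf : (DTree.leaf b (d := d)).leaves = 1 := rfl
      rw [hleaf, one_mul]
      exact h1.trans h2
  | node i t₀ t₁ ih₀ ih₁ =>
    intro σ
    rcases hσi : σ i with _ | c
    · -- σ i = none
      have hconsu : ∀ (c : Bool) (x : Fin d → Bool),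
          (∀ j e, Function.update σ i (some c) j = some e → x j = e)
          ↔ ((∀ j e, σ j = some e → x j = e) ∧ x i = c) := by
        intro c x
        constructor
        · intro hx
          refine ⟨fun j e hj => ?_, hx i c (by simp)⟩
          rcases eq_or_ne j i with rfl | hne
          · rw [hσi] at hj; cases hj
          · exact hx j e (by rwa [Function.update_of_ne hne])
        · rintro ⟨hx, hxi⟩ j e hj
          rcases eq_or_ne j i with rfl | hne
          · rw [Function.update_self] at hj
            cases hj; exact hxi
          · rw [Function.update_of_ne hne] at hj
            exact hx j e hj
      have hC : (univ.filter fun x : Fin d → Bool => ∀ j e, σ j = some e → x j = e).card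
          = (univ.filter fun x : Fin d → Bool =>
              ∀ j e, Function.update σ i (some true) j = some e → x j = e).card
          + (univ.filter fun x : Fin d → Bool =>
              ∀ j e, Function.update σ i (some false) j = some e → x j = e).card := by
        rw [← Finset.card_filter_add_card_filter_not
          (s := univ.filter fun x : Fin d → Bool => ∀ j e, σ j = some e → x j = e)
          (p := fun x => x i = true)]
        simp only [Finset.filter_filter, Bool.not_eq_true]
        congr 1
        · exact congrArg Finset.card (Finset.filter_congr fun x _ => by
            rw [hconsu true x])
        · exact congrArg Finset.card (Finset.filter_congr fun x _ => by
            rw [hconsu false x])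
      have hE : (univ.filter fun x : Fin d → Bool =>
              (∀ j e, σ j = some e → x j = e) ∧ (DTree.node i t₀ t₁).eval x ≠ par x).card
          = (univ.filter fun x : Fin d → Bool =>
              (∀ j e, Function.update σ i (some true) j = some e → x j = e)
                ∧ t₁.eval x ≠ par x).card
          + (univ.filter fun x : Fin d → Bool =>
              (∀ j e, Function.update σ i (some false) j = some e → x j = e)
                ∧ t₀.eval x ≠ par x).card := by
        rw [← Finset.card_filter_add_card_filter_not
          (s := univ.filter fun x : Fin d → Bool =>
              (∀ j e, σ j = some e → x j = e) ∧ (DTree.node i t₀ t₁).eval x ≠ par x)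
          (p := fun x => x i = true)]
        simp only [Finset.filter_filter, Bool.not_eq_true]
        congr 1
        · refine congrArg Finset.card (Finset.filter_congr fun x _ => ?_)
          rw [hconsu true x]
          constructor
          · rintro ⟨⟨hc, hne⟩, hxi⟩
            have hev : (DTree.node i t₀ t₁).eval x = t₁.eval x := by
              simp [DTree.eval, hxi]
            rw [hev] at hne
            exact ⟨⟨hc, hxi⟩, hne⟩
          · rintro ⟨⟨hc, hxi⟩, hne⟩
            have hev : (DTree.node i t₀ t₁).eval x = t₁.eval x := by
              simp [DTree.eval, hxi]
            exact ⟨⟨hc, by rw [hev]; exact hne⟩, hxi⟩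
        · refine congrArg Finset.card (Finset.filter_congr fun x _ => ?_)
          rw [hconsu false x]
          constructor
          · rintro ⟨⟨hc, hne⟩, hxi⟩
            have hev : (DTree.node i t₀ t₁).eval x = t₀.eval x := by
              simp [DTree.eval, hxi]
            rw [hev] at hne
            exact ⟨⟨hc, hxi⟩, hne⟩
          · rintro ⟨⟨hc, hxi⟩, hne⟩
            have hev : (DTree.node i t₀ t₁).eval x = t₀.eval x := by
              simp [DTree.eval, hxi]
            exact ⟨⟨hc, by rw [hev]; exact hne⟩, hxi⟩
      have i₁ := ih₁ (Function.update σ i (some true))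
      have i₀ := ih₀ (Function.update σ i (some false))
      have hL : (DTree.node i t₀ t₁).leaves = t₀.leaves + t₁.leaves := rfl
      rw [hL, hC, hE, add_mul]
      linarith
    · -- σ i = some c
      have hL : (DTree.node i t₀ t₁).leaves = t₀.leaves + t₁.leaves := rfl
      cases c
      · have hE : (univ.filter fun x : Fin d → Bool =>
              (∀ j e, σ j = some e → x j = e) ∧ (DTree.node i t₀ t₁).eval x ≠ par x).card
            = (univ.filter fun x : Fin d → Bool =>
                (∀ j e, σ j = some e → x j = e) ∧ t₀.eval x ≠ par x).card := by
          refine congrArg Finset.card (Finset.filter_congr fun x _ => ?_)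
          constructor
          · rintro ⟨hc, hne⟩
            have hev : (DTree.node i t₀ t₁).eval x = t₀.eval x := by
              simp [DTree.eval, hc i false hσi]
            rw [hev] at hne
            exact ⟨hc, hne⟩
          · rintro ⟨hc, hne⟩
            have hev : (DTree.node i t₀ t₁).eval x = t₀.eval x := by
              simp [DTree.eval, hc i false hσi]
            exact ⟨hc, by rw [hev]; exact hne⟩
        rw [hE, hL, add_mul]
        have := ih₀ σ
        linarith [this, Nat.zero_le (t₁.leaves * 2 ^ (d - (s + 1)))]
      · have hE : (univ.filter fun x : Fin d → Bool =>
              (∀ j e, σ j = some e → x j = e) ∧ (DTree.node i t₀ t₁).eval x ≠ par x).card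
            = (univ.filter fun x : Fin d → Bool =>
                (∀ j e, σ j = some e → x j = e) ∧ t₁.eval x ≠ par x).card := by
          refine congrArg Finset.card (Finset.filter_congr fun x _ => ?_)
          constructor
          · rintro ⟨hc, hne⟩
            have hev : (DTree.node i t₀ t₁).eval x = t₁.eval x := by
              simp [DTree.eval, hc i true hσi]
            rw [hev] at hne
            exact ⟨hc, hne⟩
          · rintro ⟨hc, hne⟩
            have hev : (DTree.node i t₀ t₁).eval x = t₁.eval x := by
              simp [DTree.eval, hc i true hσi]
            exact ⟨hc, by rw [hev]; exact hne⟩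
        rw [hE, hL, add_mul]
        have := ih₁ σ
        linarith [this, Nat.zero_le (t₀.leaves * 2 ^ (d - (s + 1)))]

end AuxLemmas

open Finset in
theorem stmt_10 (d s : ℕ) (hds : s + 1 ≤ d)
    (parity : (Fin d → Bool) → Bool)
    (hparity : ∀ x, parity x =
      ((univ.filter fun i : Fin d => d - (s + 1) ≤ (i : ℕ) ∧ x i = true).card % 2 == 1))
    (T : DTree d) (hT : T.leaves ≤ 2 ^ s) :
    -- (1) any partial assignment (leaf path) leaving some relevant bit unqueried has
    -- exactly half of its consistent inputs of each parity, i.e. error rate 1/2 for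
    -- any constant leaf label:
    ((∀ σ : Fin d → Option Bool,
        (∃ r : Fin d, d - (s + 1) ≤ (r : ℕ) ∧ σ r = none) →
        (univ.filter fun x : Fin d → Bool =>
            (∀ i b, σ i = some b → x i = b) ∧ parity x = true).card
          = (univ.filter fun x : Fin d → Bool =>
              (∀ i b, σ i = some b → x i = b) ∧ parity x = false).card))
    -- (2) leaves of depth ≤ s carry probability mass at least 1/2:
    ∧ (1 : ℚ) / 2 ≤ T.shallowMass s
    -- (3) consequently the 0-1 error of T against the parity target is at least 1/4:
    ∧ (1 : ℚ) / 4 ≤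
        ((univ.filter fun x : Fin d → Bool => T.eval x ≠ parity x).card : ℚ) / 2 ^ d := by
  classical
  have hflip : ∀ (x : Fin d → Bool) (r : Fin d), d - (s + 1) ≤ (r : ℕ) →
      parity (Function.update x r (!x r)) = !parity x := by
    intro x r hr
    rw [hparity, hparity]
    exact flip_concrete x r hr
  refine ⟨?_, mass_half T hT, ?_⟩
  · rintro σ ⟨r, hr1, hr2⟩
    exact halfcount parity hflip σ r hr1 hr2
  · have hM := mainM hds parity hflip T (fun _ => none)
    have hCuniv : (univ.filter fun x : Fin d → Bool =>
        ∀ i b, (fun _ : Fin d => (none : Option Bool)) i = some b → x i = b) = univ := by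
      apply Finset.filter_true_of_mem
      intro x _ i b hb
      cases hb
    have hEeq : (univ.filter fun x : Fin d → Bool =>
          (∀ i b, (fun _ : Fin d => (none : Option Bool)) i = some b → x i = b)
            ∧ T.eval x ≠ parity x).card
        = (univ.filter fun x : Fin d → Bool => T.eval x ≠ parity x).card := by
      refine congrArg Finset.card (Finset.filter_congr fun x _ => ?_)
      exact ⟨fun h => h.2, fun h => ⟨(fun i b hb => nomatch hb), h⟩⟩
    rw [hCuniv, hEeq] at hM
    clear hCuniv hEeq
    have hcard : (univ : Finset (Fin d → Bool)).card = 2 ^ d := by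
      simp [Finset.card_univ]
    rw [hcard] at hM
    set E := (univ.filter fun x : Fin d → Bool => T.eval x ≠ parity x).card with hE
    have h1 : T.leaves * 2 ^ (d - (s + 1)) ≤ 2 ^ s * 2 ^ (d - (s + 1)) :=
      Nat.mul_le_mul_right _ hT
    have h2 : (2:ℕ) ^ s * 2 ^ (d - (s + 1)) = 2 ^ (d - 1) := by
      rw [← pow_add]
      congr 1
      omega
    have h3 : 2 * 2 ^ (d - 1) = (2:ℕ) ^ d := by
      rw [← pow_succ']
      congr 1
      omega
    rw [h2] at h1
    rw [← h3] at hM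
    have key : 2 ^ d ≤ 4 * E := by
      rw [← h3]
      linarith [hM, h1]
    have keyQ : (2:ℚ) ^ d ≤ 4 * (E : ℚ) := by exact_mod_cast key
    rw [div_le_div_iff₀ (by norm_num : (0:ℚ) < 4) (by positivity : (0:ℚ) < (2:ℚ) ^ d)]
    linarith
end

section
/- If the set of decoupled classifiers over class C achieves loss at least ¢ smaller than the best single classifier in C on distribution D (i.e., min over c∈C of ℓ_D(c) − min over decoupled tuples of ℓ_D(γ_c⃗) ≥ ¢), then for every c ∈ C there exists a group k and a classifier c' ∈ C with group-k loss ℓ_{D,k}(c') ≤ ℓ_{D,k}(c) − ¢. -/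
open Finset in
theorem stmt_12 {C : Type*} (K : ℕ) (hK : 1 ≤ K)
    (ν : Fin K → ℝ) (hν : ∀ k, 0 ≤ ν k) (hν1 : ∑ k, ν k = 1)
    (ℓ : C → Fin K → ℝ) (ε : ℝ)
    (hgap : ∃ cvec : Fin K → C, ∀ c : C,
      ∑ k, ν k * ℓ (cvec k) k ≤ (∑ k, ν k * ℓ c k) - ε) :
    ∀ c : C, ∃ (k : Fin K) (c' : C), ℓ c' k ≤ ℓ c k - ε := by
  intro c
  by_contra h
  push_neg at h
  obtain ⟨cvec, hc⟩ := hgap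
  -- some k0 with ν k0 > 0
  have hex : ∃ k0 : Fin K, 0 < ν k0 := by
    by_contra hall
    push_neg at hall
    have : ∑ k, ν k = 0 := by
      apply Finset.sum_eq_zero
      intro k _
      exact le_antisymm (hall k) (hν k)
    simp [this] at hν1
  obtain ⟨k0, hk0⟩ := hex
  have hlt : ∑ k, ν k * (ℓ c k - ε) < ∑ k, ν k * ℓ (cvec k) k := by
    apply Finset.sum_lt_sum
    · intro k _
      have := h k (cvec k)
      nlinarith [hν k]
    · exact ⟨k0, Finset.mem_univ k0, by nlinarith [h k0 (cvec k0)]⟩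
  have heq : ∑ k, ν k * (ℓ c k - ε) = (∑ k, ν k * ℓ c k) - ε := by
    simp [mul_sub, Finset.sum_sub_distrib, ← Finset.sum_mul, hν1]
  linarith [hc c]
end
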